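/- For integers 0 < m < n with t_k = kπ/(n+1) (k = 1,…,n), and for every t ∈ [0,π] and every k, the quantity Ψ(t,t_k) = sin(m(t−t_k))/sin²((t−t_k)/2) − sin(m(t+t_k))/sin²((t+t_k)/2) satisfies |Ψ(π/m, t_k)| ≥ 2|sin(m t_k)| and |Ψ(π − π/m, t_k)| ≥ 2|sin(m t_k)|. -/

import Mathlib

open Real

/-- `Ψ(t,s) = sin(m(t-s))/sin²((t-s)/2) − sin(m(t+s))/sin²((t+s)/2)`. -/
noncomputable def vpPsi (m : ℕ) (t s : ℝ) : ℝ :=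
  Real.sin (m * (t - s)) / Real.sin ((t - s) / 2) ^ 2
    - Real.sin (m * (t + s)) / Real.sin ((t + s) / 2) ^ 2

lemma aux_abs (c A B : ℝ) (hB : B ≠ 0) (hA2 : A ^ 2 ≤ 1) (hB2 : B ^ 2 ≤ 1)
    (hAc : A = 0 → c = 0) :
    2 * |c| ≤ |c / A ^ 2 - (-c) / B ^ 2| := by
  rcases eq_or_ne A 0 with hA | hA
  · simp [hAc hA]
  · have hA2p : 0 < A ^ 2 := by positivity
    have hB2p : 0 < B ^ 2 := by positivity
    have h1 : (1 : ℝ) ≤ 1 / A ^ 2 := by rw [le_div_iff₀ hA2p]; linarith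
    have h2 : (1 : ℝ) ≤ 1 / B ^ 2 := by rw [le_div_iff₀ hB2p]; linarith
    have e : c / A ^ 2 - (-c) / B ^ 2 = c * (1 / A ^ 2 + 1 / B ^ 2) := by ring
    rw [e, abs_mul, abs_of_pos (show (0:ℝ) < 1 / A ^ 2 + 1 / B ^ 2 by linarith)]
    nlinarith [abs_nonneg c]

lemma key (m : ℕ) (t s c : ℝ) (hs0 : 0 < s) (hsπ : s < π)
    (ht0 : 0 ≤ t) (htπ : t ≤ π)
    (h1 : Real.sin (m * (t - s)) = c)
    (h2 : Real.sin (m * (t + s)) = -c)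
    (h3 : t = s → c = 0) :
    2 * |c| ≤ |vpPsi m t s| := by
  have hB : Real.sin ((t + s) / 2) ≠ 0 := by
    apply ne_of_gt
    apply Real.sin_pos_of_pos_of_lt_pi <;> linarith
  have hA : Real.sin ((t - s) / 2) = 0 → c = 0 := by
    intro h
    have hπ := Real.pi_pos
    have hb1 : -π < (t - s) / 2 := by linarith
    have hb2 : (t - s) / 2 < π := by linarith
    have h0 := (Real.sin_eq_zero_iff_of_lt_of_lt hb1 hb2).1 h
    exact h3 (by linarith)
  have := aux_abs c (Real.sin ((t - s) / 2)) (Real.sin ((t + s) / 2)) hB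
    (Real.sin_sq_le_one _) (Real.sin_sq_le_one _) hA
  rwa [vpPsi, h1, h2]

/-- at `t = π/m` and `t = π - π/m` one has `|Ψ(t, t_k)| ≥ 2|sin(m t_k)|`,
where `t_k = kπ/(n+1)`. -/
theorem stmt_16 (m n : ℕ) (hm : 0 < m) (hmn : m < n)
    (k : ℕ) (hk1 : 1 ≤ k) (hkn : k ≤ n) :
    2 * |Real.sin (m * ((k : ℝ) * π / (n + 1)))| ≤
      |vpPsi m (π / m) ((k : ℝ) * π / (n + 1))| ∧
    2 * |Real.sin (m * ((k : ℝ) * π / (n + 1)))| ≤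
      |vpPsi m (π - π / m) ((k : ℝ) * π / (n + 1))| := by
  have hπ := Real.pi_pos
  set s : ℝ := (k : ℝ) * π / (n + 1) with hs
  have hm' : (0 : ℝ) < m := by exact_mod_cast hm
  have hm1 : (1 : ℝ) ≤ m := by exact_mod_cast hm
  have hn1 : (0 : ℝ) < (n : ℝ) + 1 := by positivity
  have hk' : (1 : ℝ) ≤ k := by exact_mod_cast hk1
  have hkn' : (k : ℝ) ≤ n := by exact_mod_cast hkn
  have hs0 : 0 < s := by
    apply div_pos _ hn1; nlinarith
  have hsπ : s < π := by
    rw [hs, div_lt_iff₀ hn1]; nlinarith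
  have htm0 : 0 < π / m := by positivity
  have htmπ : π / m ≤ π := by
    rw [div_le_iff₀ hm']; nlinarith
  constructor
  · -- t = π / m
    have e1 : (m : ℝ) * (π / m - s) = π - m * s := by field_simp
    have e2 : (m : ℝ) * (π / m + s) = m * s + π := by field_simp; ring
    apply key m (π / m) s (Real.sin (m * s)) hs0 hsπ (le_of_lt htm0) htmπ
    · rw [e1, Real.sin_pi_sub]
    · rw [e2, Real.sin_add_pi]
    · intro h
      have : (m : ℝ) * s = π := by rw [← h]; field_simp
      rw [this, Real.sin_pi]
  · -- t = π - π / m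
    have habs : |((-1 : ℝ) ^ m * Real.sin (m * s))| = |Real.sin (m * s)| := by
      rw [abs_mul, abs_pow, abs_neg, abs_one, one_pow, one_mul]
    rw [← habs]
    have e1 : (m : ℝ) * (π - π / m - s) = m * π - (m * s + π) := by
      field_simp; ring
    have e2 : (m : ℝ) * (π - π / m + s) = m * π - (π - m * s) := by
      field_simp; ring
    apply key m (π - π / m) s ((-1 : ℝ) ^ m * Real.sin (m * s)) hs0 hsπ
      (by linarith) (by linarith)
    · rw [e1, Real.sin_nat_mul_pi_sub, Real.sin_add_pi]; ring
    · rw [e2, Real.sin_nat_mul_pi_sub, Real.sin_pi_sub]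
    · intro h
      have hms : (m : ℝ) * s = m * π - π := by
        rw [← h]; field_simp
      rw [hms, Real.sin_nat_mul_pi_sub, Real.sin_pi]
      ring
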